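/- Let m_1, …, m_n be integers with each m_i ≥ 1 satisfying m_i − 1 ≤ ∑_{j ≠ i}(m_j − 1) for all i, and let k = |{i : m_i ≥ 2}|. If k ≥ 4, then ∏_{i=1}^n m_i − (1 + ∑_{i=1}^n m_i(m_i − 1)) ≥ 2^k − 2k − 1 + (∏_{i : m_i ≥ 2}(m_i − 1)) − 1. -/

import Mathlib

set_option linter.unusedSectionVars false

open Finset

variable {ι : Type*} [DecidableEq ι]

/-- Elementary symmetric sum of `a` over subsets of `S` of size `c`. -/
def esum (a : ι → ℤ) (c : ℕ) (S : Finset ι) : ℤ :=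
  ∑ t ∈ S.powersetCard c, ∏ i ∈ t, a i

lemma esum_zero (a : ι → ℤ) (S : Finset ι) : esum a 0 S = 1 := by
  simp [esum]

lemma esum_empty (a : ι → ℤ) (c : ℕ) : esum a (c + 1) (∅ : Finset ι) = 0 := by
  unfold esum
  rw [Finset.powersetCard_eq_empty.2 (by simp), sum_empty]

lemma esum_insert (a : ι → ℤ) (c : ℕ) {x : ι} {S : Finset ι} (hx : x ∉ S) :
    esum a (c + 1) (insert x S) = esum a (c + 1) S + a x * esum a c S := by
  unfold esum
  rw [powersetCard_succ_insert hx]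
  rw [sum_union]
  · congr 1
    rw [sum_image]
    · rw [mul_sum]
      refine sum_congr rfl fun t ht => ?_
      have hxt : x ∉ t := fun h => hx ((mem_powersetCard.1 ht).1 h)
      rw [prod_insert hxt]
    · intro t ht t' ht' h
      have hxt : x ∉ t := fun h => hx ((mem_powersetCard.1 ht).1 h)
      have hxt' : x ∉ t' := fun h => hx ((mem_powersetCard.1 ht').1 h)
      have := congrArg (Finset.erase · x) h
      simpa [Finset.erase_insert hxt, Finset.erase_insert hxt'] using this
  · rw [Finset.disjoint_left]
    rintro u hu hu'
    obtain ⟨t, ht, rfl⟩ := Finset.mem_image.1 hu'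
    exact hx ((mem_powersetCard.1 hu).1 (mem_insert_self x t))

lemma esum_one (a : ι → ℤ) (S : Finset ι) : esum a 1 S = ∑ i ∈ S, a i := by
  unfold esum
  rw [powersetCard_one, sum_map]
  simp

lemma esum_card (a : ι → ℤ) (S : Finset ι) : esum a S.card S = ∏ i ∈ S, a i := by
  unfold esum
  rw [powersetCard_self, sum_singleton]

lemma choose_le_esum (a : ι → ℤ) (c : ℕ) (S : Finset ι) (ha : ∀ i ∈ S, 1 ≤ a i) :
    (S.card.choose c : ℤ) ≤ esum a c S := by
  rw [← card_powersetCard c S]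
  unfold esum
  calc ((S.powersetCard c).card : ℤ) = ∑ _t ∈ S.powersetCard c, 1 := by simp
    _ ≤ ∑ t ∈ S.powersetCard c, ∏ i ∈ t, a i := by
        refine sum_le_sum fun t ht => ?_
        have : ∏ i ∈ t, (1 : ℤ) ≤ ∏ i ∈ t, a i := by
          refine prod_le_prod (fun i _ => zero_le_one) fun i hi => ?_
          exact ha i ((mem_powersetCard.1 ht).1 hi)
        simpa using this

lemma two_choose_two (k : ℕ) : 2 * (k.choose 2 : ℤ) = k * (k - 1) := by
  induction k with
  | zero => simp
  | succ n ih =>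
    rw [Nat.choose_succ_succ, Nat.choose_one_right]
    push_cast
    push_cast at ih
    linarith [ih]

lemma sq_sum_eq (a : ι → ℤ) (S : Finset ι) :
    (∑ i ∈ S, a i) ^ 2 = ∑ i ∈ S, a i * a i + 2 * esum a 2 S := by
  induction S using Finset.induction_on with
  | empty => simp [esum_empty]
  | insert _ _ hx =>
    rename_i x s ih
    rw [sum_insert hx, sum_insert hx, esum_insert a 1 hx, esum_one]
    ring_nf
    ring_nf at ih
    linarith [ih]

lemma claim_aux (a : ι → ℤ) (x : ℤ) (hx : 1 ≤ x) (S : Finset ι) (ha : ∀ i ∈ S, 1 ≤ a i) :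
    esum a 2 S + ((S.card : ℤ) - 1) * x * (∑ i ∈ S, a i) ≤
      2 * x * esum a 2 S + (S.card.choose 2 : ℤ) := by
  induction S using Finset.induction_on with
  | empty => simp [esum_empty]
  | insert _ _ hy =>
    rename_i y s ih
    have hb : 1 ≤ a y := ha y (mem_insert_self y s)
    have ha' : ∀ i ∈ s, 1 ≤ a i := fun i hi => ha i (mem_insert_of_mem hi)
    have IH := ih ha'
    have hAk : (s.card : ℤ) ≤ ∑ i ∈ s, a i := by
      calc (s.card : ℤ) = ∑ _i ∈ s, 1 := by simp
        _ ≤ ∑ i ∈ s, a i := sum_le_sum ha'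
    rw [esum_insert a 1 hy, esum_one, sum_insert hy, card_insert_of_notMem hy,
      Nat.choose_succ_succ, Nat.choose_one_right]
    push_cast
    set A := ∑ i ∈ s, a i
    set e2 := esum a 2 s
    set k := (s.card : ℤ)
    set b := a y
    have hk0 : (0 : ℤ) ≤ k := Nat.cast_nonneg _
    have h1 : 0 ≤ b * (x - 1) * (A - k) :=
      mul_nonneg (mul_nonneg (by linarith) (by linarith)) (by linarith)
    have h2 : 0 ≤ x * (b - 1) * (A - k) :=
      mul_nonneg (mul_nonneg (by linarith) (by linarith)) (by linarith)
    have h3 : 0 ≤ k * (x - 1) * (b - 1) :=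
      mul_nonneg (mul_nonneg hk0 (by linarith)) (by linarith)
    nlinarith [IH, h1, h2, h3]

lemma factB (a : ι → ℤ) (S : Finset ι) (ha : ∀ i ∈ S, 1 ≤ a i) :
    ((S.card : ℤ) - 2) * (esum a 2 S - (S.card.choose 2 : ℤ)) ≤
      2 * (esum a 3 S - (S.card.choose 3 : ℤ)) := by
  induction S using Finset.induction_on with
  | empty => simp [esum_empty]
  | insert _ _ hy =>
    rename_i y s ih
    have hb : 1 ≤ a y := ha y (mem_insert_self y s)
    have ha' : ∀ i ∈ s, 1 ≤ a i := fun i hi => ha i (mem_insert_of_mem hi)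
    have IH := ih ha'
    have hcl := claim_aux a (a y) hb s ha'
    have h2c := two_choose_two s.card
    rw [esum_insert a 2 hy, esum_insert a 1 hy, esum_one, card_insert_of_notMem hy,
      Nat.choose_succ_succ s.card 2, Nat.choose_succ_succ s.card 1, Nat.choose_one_right]
    push_cast
    nlinarith [IH, hcl, h2c]

lemma key_lemma (S : Finset ι) (a : ι → ℤ) (ha : ∀ i ∈ S, 1 ≤ a i)
    (hpoly : ∀ i ∈ S, 2 * a i ≤ ∑ j ∈ S, a j) (hk : 4 ≤ S.card) :
    2 ^ S.card - 2 * (S.card : ℤ) - 2 + ∏ i ∈ S, a i ≤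
      ∏ i ∈ S, (a i + 1) - 1 - ∑ i ∈ S, (a i * a i + a i) := by
  set k := S.card with hkdef
  set A := ∑ i ∈ S, a i with hA
  set Q := ∑ i ∈ S, a i * a i with hQ
  -- expansion of the product
  have hexp : ∏ i ∈ S, (a i + 1) = ∑ c ∈ range (k + 1), esum a c S := by
    have h1 : ∏ i ∈ S, (a i + 1) = ∑ t ∈ S.powerset, ∏ i ∈ t, a i := by
      rw [prod_add a (fun _ => 1) S]
      simp
    rw [h1]
    rw [← sum_fiberwise_of_maps_to (g := fun t : Finset ι => t.card)
      (t := range (k + 1)) (fun t ht => by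
        rw [mem_range, Nat.lt_succ_iff]
        exact card_le_card (mem_powerset.1 ht)) (fun t => ∏ i ∈ t, a i)]
    refine sum_congr rfl fun c _ => ?_
    unfold esum
    rw [powersetCard_eq_filter]
  -- the subset {1,2,3,k} of card classes
  have hsubset : ({1, 2, 3, k} : Finset ℕ) ⊆ range (k + 1) := by
    intro c hc
    simp only [mem_insert, mem_singleton] at hc
    rw [mem_range]
    rcases hc with rfl | rfl | rfl | rfl <;> omega
  have hterm : ∀ c ∈ range (k + 1), (0 : ℤ) ≤ esum a c S - (k.choose c : ℤ) := by
    intro c _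
    have := choose_le_esum a c S ha
    linarith
  have hlow : ∑ c ∈ ({1, 2, 3, k} : Finset ℕ), (esum a c S - (k.choose c : ℤ)) ≤
      ∑ c ∈ range (k + 1), (esum a c S - (k.choose c : ℤ)) :=
    sum_le_sum_of_subset_of_nonneg hsubset (fun c hc _ => hterm c hc)
  have hchoosesum : ∑ c ∈ range (k + 1), (k.choose c : ℤ) = 2 ^ k := by
    rw [← Nat.cast_sum]
    rw [Nat.sum_range_choose]
    push_cast
    ring
  have hrhs : ∑ c ∈ range (k + 1), (esum a c S - (k.choose c : ℤ)) =
      ∏ i ∈ S, (a i + 1) - 2 ^ k := by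
    rw [sum_sub_distrib, hchoosesum, hexp]
  -- compute the small sum
  have h1ne : (1 : ℕ) ∉ ({2, 3, k} : Finset ℕ) := by
    simp only [mem_insert, mem_singleton]; omega
  have h2ne : (2 : ℕ) ∉ ({3, k} : Finset ℕ) := by
    simp only [mem_insert, mem_singleton]; omega
  have h3ne : (3 : ℕ) ∉ ({k} : Finset ℕ) := by
    simp only [mem_singleton]; omega
  have hsmall : ∑ c ∈ ({1, 2, 3, k} : Finset ℕ), (esum a c S - (k.choose c : ℤ)) =
      (A - k) + (esum a 2 S - (k.choose 2 : ℤ)) + (esum a 3 S - (k.choose 3 : ℤ)) +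
        (∏ i ∈ S, a i - 1) := by
    rw [show ({1, 2, 3, k} : Finset ℕ) = insert 1 (insert 2 (insert 3 {k})) from rfl,
      sum_insert h1ne, sum_insert h2ne, sum_insert h3ne, sum_singleton,
      esum_one, hkdef, esum_card, Nat.choose_self, Nat.choose_one_right]
    push_cast
    ring
  -- polygon-based bound: Q - k ≤ 2 (e2 - C2)
  have hAk : (k : ℤ) ≤ A := by
    rw [hA]
    calc (k : ℤ) = ∑ _i ∈ S, 1 := by simp [hkdef]
      _ ≤ ∑ i ∈ S, a i := sum_le_sum ha
  have hAQ : 2 * Q + (k : ℤ) * A - 2 * A ≤ A * A := by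
    have : ∀ i ∈ S, 2 * (a i * a i) + A - 2 * a i ≤ a i * A := by
      intro i hi
      have h1 := ha i hi
      have h2 := hpoly i hi
      nlinarith [mul_nonneg (sub_nonneg.2 h1) (sub_nonneg.2 h2)]
    calc 2 * Q + (k : ℤ) * A - 2 * A = ∑ i ∈ S, (2 * (a i * a i) + A - 2 * a i) := by
          rw [sum_sub_distrib, sum_add_distrib, ← mul_sum, ← mul_sum, sum_const,
            nsmul_eq_mul, ← hQ, ← hA, ← hkdef]
      _ ≤ ∑ i ∈ S, a i * A := sum_le_sum this
      _ = A * A := by rw [← sum_mul, ← hA]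
  have hsq : A ^ 2 = Q + 2 * esum a 2 S := sq_sum_eq a S
  have h2c := two_choose_two k
  have hstep2 : Q - (k : ℤ) ≤ 2 * (esum a 2 S - (k.choose 2 : ℤ)) := by
    have hkA : ((k : ℤ) - 2) * (k : ℤ) ≤ ((k : ℤ) - 2) * A := by
      have : (0 : ℤ) ≤ (k : ℤ) - 2 := by
        have : (4 : ℤ) ≤ (k : ℤ) := by exact_mod_cast hk
        linarith
      exact mul_le_mul_of_nonneg_left hAk this
    nlinarith [hAQ, hsq, h2c, hkA]
  have hfb := factB a S ha
  have he2 := choose_le_esum a 2 S ha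
  have hstep3 : esum a 2 S - (k.choose 2 : ℤ) ≤ esum a 3 S - (k.choose 3 : ℤ) := by
    have hk4 : (4 : ℤ) ≤ (k : ℤ) := by exact_mod_cast hk
    nlinarith [hfb, he2]
  -- assemble
  have hsumQA : ∑ i ∈ S, (a i * a i + a i) = Q + A := by
    rw [sum_add_distrib, ← hQ, ← hA]
  rw [hsumQA]
  linarith [hlow, hrhs, hsmall, hstep2, hstep3]

/-- The `k ≥ 4` case of the combinatorial inequality (Proposition A.3). -/
theorem stmt_2 (n : ℕ) (m : Fin n → ℤ) (hm : ∀ i, 1 ≤ m i)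
    (hpoly : ∀ i, m i - 1 ≤ ∑ j ∈ Finset.univ.erase i, (m j - 1))
    (k : ℕ) (hk : k = (Finset.univ.filter (fun i => 2 ≤ m i)).card) (hk4 : 4 ≤ k) :
    (2 : ℤ) ^ k - 2 * k - 1 +
        (∏ i ∈ Finset.univ.filter (fun i => 2 ≤ m i), (m i - 1)) - 1 ≤
      ∏ i, m i - (1 + ∑ i, m i * (m i - 1)) := by
  classical
  set S : Finset (Fin n) := Finset.univ.filter (fun i => 2 ≤ m i) with hS
  set a : Fin n → ℤ := fun i => m i - 1 with haa
  have hoff : ∀ i, i ∉ S → m i = 1 := by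
    intro i hi
    rw [hS, mem_filter] at hi
    push_neg at hi
    have := hi (mem_univ i)
    have := hm i
    omega
  have ha : ∀ i ∈ S, 1 ≤ a i := by
    intro i hi
    rw [hS, mem_filter] at hi
    simp only [haa]
    linarith [hi.2]
  -- product identity
  have hprod : ∏ i, m i = ∏ i ∈ S, (a i + 1) := by
    rw [← prod_filter_mul_prod_filter_not univ (fun i => 2 ≤ m i) m]
    have h2 : ∏ i ∈ univ.filter (fun i => ¬ 2 ≤ m i), m i = 1 := by
      refine prod_eq_one fun i hi => ?_
      refine hoff i ?_
      rw [hS, mem_filter]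
      rw [mem_filter] at hi
      tauto
    rw [h2, mul_one]
    exact prod_congr rfl fun i _ => by simp [haa]
  -- sum identity
  have hsum : ∑ i, m i * (m i - 1) = ∑ i ∈ S, (a i * a i + a i) := by
    rw [← sum_filter_add_sum_filter_not univ (fun i => 2 ≤ m i) (fun i => m i * (m i - 1))]
    have h2 : ∑ i ∈ univ.filter (fun i => ¬ 2 ≤ m i), m i * (m i - 1) = 0 := by
      refine sum_eq_zero fun i hi => ?_
      have : m i = 1 := by
        refine hoff i ?_
        rw [hS, mem_filter]
        rw [mem_filter] at hi
        tauto
      rw [this]; ring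
    rw [h2, add_zero]
    exact sum_congr rfl fun i _ => by simp only [haa]; ring
  -- the total sum of a equals the sum over S
  have hAuniv : ∑ j, a j = ∑ j ∈ S, a j := by
    rw [← sum_filter_add_sum_filter_not univ (fun i => 2 ≤ m i) a]
    have h2 : ∑ i ∈ univ.filter (fun i => ¬ 2 ≤ m i), a i = 0 := by
      refine sum_eq_zero fun i hi => ?_
      have : m i = 1 := by
        refine hoff i ?_
        rw [hS, mem_filter]
        rw [mem_filter] at hi
        tauto
      simp [haa, this]
    rw [h2, add_zero]
  -- polygon inequality over S
  have hpoly' : ∀ i ∈ S, 2 * a i ≤ ∑ j ∈ S, a j := by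
    intro i hi
    have h1 := hpoly i
    have h2 : ∑ j ∈ univ.erase i, (m j - 1) = (∑ j, a j) - a i := by
      have := Finset.add_sum_erase univ a (mem_univ i)
      simp only [haa] at this ⊢
      linarith [this]
    rw [h2, hAuniv] at h1
    simp only [haa] at h1 ⊢
    linarith
  -- cardinality
  have hcard : S.card = k := hk.symm
  have hkey := key_lemma S a ha hpoly' (by omega)
  rw [hcard] at hkey
  rw [hprod, hsum]
  have hprodS : ∏ i ∈ S, (m i - 1) = ∏ i ∈ S, a i := prod_congr rfl fun i _ => rfl
  rw [hS] at hprodS ⊢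
  rw [hprodS]
  rw [← hS]
  linarith [hkey]
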